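/- A word w over the alphabet {H, U, D} with n occurrences of each letter is an S-Motzkin path if and only if, for every prefix p of w: (#U in p) ≤ (#H in p) ≤ (#U in p) + 1 and (#D in p) ≤ (#U in p). In particular the conditions of being a Motzkin path (nonnegative height) follow from these prefix inequalities. -/

import Mathlib

/-- The three step types of a Motzkin path: H = (1,0), U = (1,1), D = (1,-1). -/
inductive Step : Type | H | U | D
deriving DecidableEq, Repr

/-- Between every two consecutive H steps there is exactly one U step. -/
def OneUBetweenH (w : List Step) : Prop :=
  ∀ p mid s : List Step, w = p ++ Step.H :: mid ++ Step.H :: s →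
    Step.H ∉ mid → mid.count Step.U = 1

/-- The k-th D step occurs after at least k H steps and at least k U steps. -/
def DCond (w : List Step) : Prop :=
  ∀ p s : List Step, w = p ++ Step.D :: s →
    p.count Step.D + 1 ≤ p.count Step.H ∧ p.count Step.D + 1 ≤ p.count Step.U

/-- A Motzkin path: every prefix has #U ≥ #D, and the total height is 0. -/
def IsMotzkin (w : List Step) : Prop :=
  w.count Step.U = w.count Step.D ∧
  ∀ p : List Step, p <+: w → p.count Step.D ≤ p.count Step.U

/-- An S-Motzkin path of length 3n (original definition): a Motzkin path with n steps
of each type, starting with H, with exactly one U between consecutive H steps,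
and where the k-th D occurs after at least k H steps and k U steps. -/
def IsSMotzkin (n : ℕ) (w : List Step) : Prop :=
  IsMotzkin w ∧ w.count Step.H = n ∧ w.count Step.U = n ∧ w.count Step.D = n ∧
  (w ≠ [] → w.head? = some Step.H) ∧ OneUBetweenH w ∧ DCond w

/-- Split a list at the last occurrence of an element. -/
lemma last_split {α : Type*} [DecidableEq α] (a : α) :
    ∀ l : List α, a ∈ l → ∃ q r : List α, l = q ++ a :: r ∧ a ∉ r := by
  intro l
  induction l with
  | nil => intro h; exact absurd h List.not_mem_nil
  | cons b t ih =>
    intro h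
    by_cases hat : a ∈ t
    · obtain ⟨q, r, hqr, har⟩ := ih hat
      exact ⟨b :: q, r, by rw [hqr]; rfl, har⟩
    · have hab : a = b := by
        rcases List.mem_cons.mp h with h' | h'
        · exact h'
        · exact absurd h' hat
      exact ⟨[], t, by rw [hab]; rfl, hat⟩

/-- Split a list at the first occurrence of an element. -/
lemma first_split {α : Type*} [DecidableEq α] (a : α) :
    ∀ l : List α, a ∈ l → ∃ q r : List α, l = q ++ a :: r ∧ a ∉ q := by
  intro l
  induction l with
  | nil => intro h; exact absurd h List.not_mem_nil
  | cons b t ih =>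
    intro h
    by_cases hab : a = b
    · exact ⟨[], t, by rw [hab]; rfl, by simp⟩
    · have hat : a ∈ t := by
        rcases List.mem_cons.mp h with h' | h'
        · exact absurd h' hab
        · exact h'
      obtain ⟨q, r, hqr, haq⟩ := ih hat
      exact ⟨b :: q, r, by rw [hqr]; rfl, by simp [haq, Ne.symm, hab]⟩

/-- Before the `j`-th H there are exactly `j-1` U's. -/
lemma countU_eq_countH_before_H (w : List Step)
    (hhead : w ≠ [] → w.head? = some Step.H) (hone : OneUBetweenH w) :
    ∀ q s : List Step, w = q ++ Step.H :: s → q.count Step.U = q.count Step.H := by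
  have key : ∀ m : ℕ, ∀ q s : List Step, q.length = m → w = q ++ Step.H :: s →
      q.count Step.U = q.count Step.H := by
    intro m
    induction m using Nat.strong_induction_on with
    | _ m ih =>
      intro q s hlen heq
      rcases hq : q with _ | ⟨x, q'⟩
      · simp
      · subst hq
        -- first letter of w is x, hence x = H
        have hx : x = Step.H := by
          have h1 : w.head? = some x := by rw [heq]; rfl
          have h2 := hhead (by rw [heq]; simp)
          rw [h1] at h2
          exact Option.some.inj h2
        subst hx
        have hmem : Step.H ∈ Step.H :: q' := List.mem_cons_self
        obtain ⟨q1, r, hq1r, hr⟩ := last_split Step.H _ hmem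
        have hw : w = q1 ++ Step.H :: r ++ Step.H :: s := by
          rw [heq, hq1r]
        have hrU : r.count Step.U = 1 := hone q1 r s hw hr
        have hlt : q1.length < m := by
          have h1 := congrArg List.length hq1r
          simp at h1 hlen
          omega
        have hIH : q1.count Step.U = q1.count Step.H := by
          refine ih q1.length hlt q1 (r ++ Step.H :: s) rfl ?_
          rw [heq, hq1r]; simp
        have hrH : r.count Step.H = 0 := List.count_eq_zero_of_not_mem hr
        rw [hq1r]
        simp [List.count_append, List.count_cons, hIH, hrU, hrH]
  intro q s heq
  exact key q.length q s rfl heq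

theorem smotzkin_iff_prefix_ineqs (n : ℕ) (w : List Step)
    (hH : w.count Step.H = n) (hU : w.count Step.U = n) (hD : w.count Step.D = n) :
    (((w ≠ [] → w.head? = some Step.H) ∧ OneUBetweenH w ∧ DCond w) ↔
      (∀ p : List Step, p <+: w →
        p.count Step.U ≤ p.count Step.H ∧ p.count Step.H ≤ p.count Step.U + 1 ∧
          p.count Step.D ≤ p.count Step.U)) ∧
    ((∀ p : List Step, p <+: w →
        p.count Step.U ≤ p.count Step.H ∧ p.count Step.H ≤ p.count Step.U + 1 ∧
          p.count Step.D ≤ p.count Step.U) → IsMotzkin w) := by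
  constructor
  · constructor
    · rintro ⟨hhead, hone, hd⟩ p hp
      obtain ⟨s, hs⟩ := hp
      have heq : w = p ++ s := hs.symm
      have hUH : p.count Step.U ≤ p.count Step.H ∧
          p.count Step.H ≤ p.count Step.U + 1 := by
        by_cases hHp : Step.H ∈ p
        · obtain ⟨q, r, hqr, hr⟩ := last_split Step.H p hHp
          have hB : q.count Step.U = q.count Step.H :=
            countU_eq_countH_before_H w hhead hone q (r ++ s) (by rw [heq, hqr]; simp)
          have hrH : r.count Step.H = 0 := List.count_eq_zero_of_not_mem hr
          have hrU : r.count Step.U ≤ 1 := by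
            by_cases hHs : Step.H ∈ s
            · obtain ⟨s1, s2, hs12, hs1⟩ := first_split Step.H s hHs
              have hmid : Step.H ∉ r ++ s1 := by
                simp [List.mem_append, hr, hs1]
              have := hone q (r ++ s1) s2 (by rw [heq, hqr, hs12]; simp) hmid
              simp [List.count_append] at this
              omega
            · have hsH : s.count Step.H = 0 := List.count_eq_zero_of_not_mem hHs
              have h1 : w.count Step.H = n := hH
              have h2 : w.count Step.U = n := hU
              rw [heq, hqr] at h1 h2
              simp [List.count_append, List.count_cons, hsH, hrH] at h1 h2
              omega
          rw [hqr]
          simp [List.count_append, List.count_cons, hrH]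
          omega
        · have hp0 : p = [] := by
            rcases p with _ | ⟨x, p'⟩
            · rfl
            · exfalso
              have h1 : w.head? = some x := by rw [heq]; rfl
              have h2 := hhead (by rw [heq]; simp)
              rw [h1] at h2
              have : x = Step.H := Option.some.inj h2
              exact hHp (this ▸ (List.mem_cons_self : x ∈ x :: p'))
          simp [hp0]
      refine ⟨hUH.1, hUH.2, ?_⟩
      by_cases hDp : Step.D ∈ p
      · obtain ⟨q, r, hqr, hr⟩ := last_split Step.D p hDp
        have hdc := (hd q (r ++ s) (by rw [heq, hqr]; simp)).2
        have hrD : r.count Step.D = 0 := List.count_eq_zero_of_not_mem hr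
        rw [hqr]
        simp [List.count_append, List.count_cons, hrD]
        omega
      · simp [List.count_eq_zero_of_not_mem hDp]
    · intro hin
      refine ⟨?_, ?_, ?_⟩
      · -- head
        intro hne
        rcases hw : w with _ | ⟨x, t⟩
        · exact absurd hw hne
        · have h1 := hin [x] ⟨t, by rw [hw]; rfl⟩
          simp [List.count_cons, List.count_nil] at h1
          cases x with
          | H => rfl
          | U => simp at h1
          | D => simp at h1
      · -- OneUBetweenH
        intro p mid s heq hmid
        have hmidH : mid.count Step.H = 0 := List.count_eq_zero_of_not_mem hmid
        have h0 := hin p ⟨Step.H :: mid ++ Step.H :: s, by simp [heq]⟩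
        have h1 := hin (p ++ [Step.H]) ⟨mid ++ Step.H :: s, by simp [heq]⟩
        have h2 := hin (p ++ Step.H :: mid) ⟨Step.H :: s, by simp [heq]⟩
        have h3 := hin (p ++ Step.H :: mid ++ [Step.H]) ⟨s, by simp [heq]⟩
        simp [List.count_append, List.count_cons, hmidH] at h0 h1 h2 h3
        omega
      · -- DCond
        intro p s heq
        have h0 := hin p ⟨Step.D :: s, by simp [heq]⟩
        have h1 := hin (p ++ [Step.D]) ⟨s, by simp [heq]⟩
        simp [List.count_append, List.count_cons] at h0 h1
        omega
  · intro hin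
    refine ⟨by omega, fun p hp => (hin p hp).2.2⟩
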